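/- Let φ_1, φ_2 ∈ ℝ with sin φ_1 ≠ 0, sin φ_2 ≠ 0 and sin((φ_1 + φ_2)/2) ≠ 0, and set p_j = e^{−i(φ_j + π/2)} for j = 1, 2 (so |p_j| = 1). Then for any ξ_1, ξ_2 ∈ ℂ, the 2×2 Gram determinant det [[1 + e^{ξ_1 + ξ_1*}/(p_1 + p_1*), e^{ξ_1 + ξ_2*}/(p_1 + p_2*)],[e^{ξ_2 + ξ_1*}/(p_2 + p_1*), 1 + e^{ξ_2 + ξ_2*}/(p_2 + p_2*)]] equals 1 + E_1 + E_2 + a_{12} E_1 E_2, where E_j = e^{ξ_j + ξ_j*}/(p_j + p_j*) and a_{12} = sin²((φ_2 − φ_1)/2) / sin²((φ_2 + φ_1)/2). -/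
import Mathlib

noncomputable section

private lemma gram_aux (A B σ1 σ2 T : ℂ) (h1 : σ1 ≠ 0) (h2 : σ2 ≠ 0) (hT : T ≠ 0) :
    (1 + A / (-2 * σ1)) * (1 + B / (-2 * σ2)) - A * B / (4 * T)
      = 1 + A / (-2 * σ1) + B / (-2 * σ2)
        + ((T - σ1 * σ2) / T) * (A / (-2 * σ1)) * (B / (-2 * σ2)) := by
  have key : A * B / (4 * T) = (A / (-2 * σ1)) * (B / (-2 * σ2)) * (σ1 * σ2 / T) := by
    rw [div_mul_div_comm, div_mul_div_comm,
      div_eq_div_iff (mul_ne_zero (by norm_num) hT)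
        (mul_ne_zero (mul_ne_zero (mul_ne_zero (by norm_num : (-2 : ℂ) ≠ 0) h1)
          (mul_ne_zero (by norm_num : (-2 : ℂ) ≠ 0) h2)) hT)]
    ring
  have hco : (T - σ1 * σ2) / T = 1 - σ1 * σ2 / T := by
    rw [sub_div, div_self hT]
  rw [key, hco]
  ring

/-- expansion of the 2×2 Gram determinant giving the two-dark-soliton tau
function, with interaction coefficient `a₁₂ = sin²((φ₂−φ₁)/2)/sin²((φ₂+φ₁)/2)`. -/
theorem two_soliton_gram_determinant (φ₁ φ₂ : ℝ)
    (hs1 : Real.sin φ₁ ≠ 0) (hs2 : Real.sin φ₂ ≠ 0)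
    (hs12 : Real.sin ((φ₁ + φ₂) / 2) ≠ 0)
    (ξ₁ ξ₂ : ℂ) (p₁ p₂ : ℂ)
    (hp1 : p₁ = Complex.exp (-(Complex.I) * ((φ₁ : ℂ) + (Real.pi : ℂ) / 2)))
    (hp2 : p₂ = Complex.exp (-(Complex.I) * ((φ₂ : ℂ) + (Real.pi : ℂ) / 2)))
    (E₁ E₂ : ℂ)
    (hE1 : E₁ = Complex.exp (ξ₁ + starRingEnd ℂ ξ₁) / (p₁ + starRingEnd ℂ p₁))
    (hE2 : E₂ = Complex.exp (ξ₂ + starRingEnd ℂ ξ₂) / (p₂ + starRingEnd ℂ p₂)) :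
    Matrix.det
      !![1 + Complex.exp (ξ₁ + starRingEnd ℂ ξ₁) / (p₁ + starRingEnd ℂ p₁),
           Complex.exp (ξ₁ + starRingEnd ℂ ξ₂) / (p₁ + starRingEnd ℂ p₂);
         Complex.exp (ξ₂ + starRingEnd ℂ ξ₁) / (p₂ + starRingEnd ℂ p₁),
           1 + Complex.exp (ξ₂ + starRingEnd ℂ ξ₂) / (p₂ + starRingEnd ℂ p₂)]
      = 1 + E₁ + E₂
        + ((Real.sin ((φ₂ - φ₁) / 2) ^ 2 / Real.sin ((φ₂ + φ₁) / 2) ^ 2 : ℝ) : ℂ)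
          * E₁ * E₂ := by
  -- conjugates of p₁, p₂
  have hc1 : starRingEnd ℂ p₁ = Complex.exp (Complex.I * ((φ₁ : ℂ) + (Real.pi : ℂ) / 2)) := by
    rw [hp1, ← Complex.exp_conj]
    congr 1
    simp [map_div₀, map_ofNat, Complex.conj_I, Complex.conj_ofReal]
  have hc2 : starRingEnd ℂ p₂ = Complex.exp (Complex.I * ((φ₂ : ℂ) + (Real.pi : ℂ) / 2)) := by
    rw [hp2, ← Complex.exp_conj]
    congr 1
    simp [map_div₀, map_ofNat, Complex.conj_I, Complex.conj_ofReal]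
  -- diagonal denominators
  have key : ∀ φ : ℝ, Complex.exp (-(Complex.I) * ((φ : ℂ) + (Real.pi : ℂ) / 2))
      + Complex.exp (Complex.I * ((φ : ℂ) + (Real.pi : ℂ) / 2)) = -2 * (Real.sin φ : ℂ) := by
    intro φ
    have h1 : Complex.exp (Complex.I * ((φ : ℂ) + (Real.pi : ℂ) / 2))
        = Complex.cos ((φ : ℂ) + (Real.pi : ℂ) / 2)
          + Complex.sin ((φ : ℂ) + (Real.pi : ℂ) / 2) * Complex.I := by
      rw [mul_comm, Complex.exp_mul_I]
    have h2 : Complex.exp (-(Complex.I) * ((φ : ℂ) + (Real.pi : ℂ) / 2))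
        = Complex.cos ((φ : ℂ) + (Real.pi : ℂ) / 2)
          - Complex.sin ((φ : ℂ) + (Real.pi : ℂ) / 2) * Complex.I := by
      have h : -(Complex.I) * ((φ : ℂ) + (Real.pi : ℂ) / 2)
          = (-((φ : ℂ) + (Real.pi : ℂ) / 2)) * Complex.I := by ring
      rw [h, Complex.exp_mul_I, Complex.cos_neg, Complex.sin_neg]
      ring
    have h3 : Complex.cos ((φ : ℂ) + (Real.pi : ℂ) / 2) = - Complex.sin (φ : ℂ) :=
      Complex.cos_add_pi_div_two _
    rw [h1, h2, h3, ← Complex.ofReal_sin]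
    ring
  have hd1 : p₁ + starRingEnd ℂ p₁ = -2 * (Real.sin φ₁ : ℂ) := by rw [hc1, hp1]; exact key φ₁
  have hd2 : p₂ + starRingEnd ℂ p₂ = -2 * (Real.sin φ₂ : ℂ) := by rw [hc2, hp2]; exact key φ₂
  -- cross denominators product
  have hcross : (p₁ + starRingEnd ℂ p₂) * (p₂ + starRingEnd ℂ p₁)
      = 4 * (Real.sin ((φ₁ + φ₂) / 2) : ℂ) ^ 2 := by
    rw [hc1, hc2, hp1, hp2]
    have expand : (Complex.exp (-(Complex.I) * ((φ₁ : ℂ) + (Real.pi : ℂ) / 2))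
          + Complex.exp (Complex.I * ((φ₂ : ℂ) + (Real.pi : ℂ) / 2)))
        * (Complex.exp (-(Complex.I) * ((φ₂ : ℂ) + (Real.pi : ℂ) / 2))
          + Complex.exp (Complex.I * ((φ₁ : ℂ) + (Real.pi : ℂ) / 2)))
        = 2 + Complex.exp (-(Complex.I) * ((φ₁ : ℂ) + (φ₂ : ℂ) + (Real.pi : ℂ)))
            + Complex.exp (Complex.I * ((φ₁ : ℂ) + (φ₂ : ℂ) + (Real.pi : ℂ))) := by
      rw [mul_add, add_mul, add_mul, ← Complex.exp_add, ← Complex.exp_add, ← Complex.exp_add,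
        ← Complex.exp_add]
      have e1 : -(Complex.I) * ((φ₁ : ℂ) + (Real.pi : ℂ) / 2)
          + Complex.I * ((φ₁ : ℂ) + (Real.pi : ℂ) / 2) = 0 := by ring
      have e2 : Complex.I * ((φ₂ : ℂ) + (Real.pi : ℂ) / 2)
          + (-(Complex.I) * ((φ₂ : ℂ) + (Real.pi : ℂ) / 2)) = 0 := by ring
      have e3 : -(Complex.I) * ((φ₁ : ℂ) + (Real.pi : ℂ) / 2)
          + (-(Complex.I) * ((φ₂ : ℂ) + (Real.pi : ℂ) / 2))
          = -(Complex.I) * ((φ₁ : ℂ) + (φ₂ : ℂ) + (Real.pi : ℂ)) := by ring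
      have e4 : Complex.I * ((φ₂ : ℂ) + (Real.pi : ℂ) / 2)
          + Complex.I * ((φ₁ : ℂ) + (Real.pi : ℂ) / 2)
          = Complex.I * ((φ₁ : ℂ) + (φ₂ : ℂ) + (Real.pi : ℂ)) := by ring
      rw [e1, e2, e3, e4, Complex.exp_zero]
      ring
    rw [expand]
    have h1 : Complex.exp (Complex.I * ((φ₁ : ℂ) + (φ₂ : ℂ) + (Real.pi : ℂ)))
        = Complex.cos ((φ₁ : ℂ) + (φ₂ : ℂ) + (Real.pi : ℂ))
          + Complex.sin ((φ₁ : ℂ) + (φ₂ : ℂ) + (Real.pi : ℂ)) * Complex.I := by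
      rw [mul_comm, Complex.exp_mul_I]
    have h2 : Complex.exp (-(Complex.I) * ((φ₁ : ℂ) + (φ₂ : ℂ) + (Real.pi : ℂ)))
        = Complex.cos ((φ₁ : ℂ) + (φ₂ : ℂ) + (Real.pi : ℂ))
          - Complex.sin ((φ₁ : ℂ) + (φ₂ : ℂ) + (Real.pi : ℂ)) * Complex.I := by
      have h : -(Complex.I) * ((φ₁ : ℂ) + (φ₂ : ℂ) + (Real.pi : ℂ))
          = (-((φ₁ : ℂ) + (φ₂ : ℂ) + (Real.pi : ℂ))) * Complex.I := by ring
      rw [h, Complex.exp_mul_I, Complex.cos_neg, Complex.sin_neg]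
      ring
    have h3 : Complex.cos ((φ₁ : ℂ) + (φ₂ : ℂ) + (Real.pi : ℂ))
        = - Complex.cos ((φ₁ : ℂ) + (φ₂ : ℂ)) := Complex.cos_add_pi _
    have h4 : Complex.cos ((φ₁ : ℂ) + (φ₂ : ℂ))
        = 1 - 2 * (Real.sin ((φ₁ + φ₂) / 2) : ℂ) ^ 2 := by
      have h := Complex.cos_two_mul' ((((φ₁ + φ₂) / 2 : ℝ)) : ℂ)
      have hp : (2 : ℂ) * ((((φ₁ + φ₂) / 2 : ℝ)) : ℂ) = (φ₁ : ℂ) + (φ₂ : ℂ) := by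
        push_cast; ring
      have hsc := Complex.sin_sq_add_cos_sq ((((φ₁ + φ₂) / 2 : ℝ)) : ℂ)
      rw [hp] at h
      rw [← Complex.ofReal_sin] at hsc
      rw [h, ← Complex.ofReal_sin]
      linear_combination hsc
    rw [h1, h2, h3, h4]
    ring
  -- nonvanishing of denominators
  have hσ1 : (Real.sin φ₁ : ℂ) ≠ 0 := Complex.ofReal_ne_zero.mpr hs1
  have hσ2 : (Real.sin φ₂ : ℂ) ≠ 0 := Complex.ofReal_ne_zero.mpr hs2
  have hσs : (Real.sin ((φ₁ + φ₂) / 2) : ℂ) ≠ 0 := Complex.ofReal_ne_zero.mpr hs12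
  have hd1' : p₁ + starRingEnd ℂ p₁ ≠ 0 := by
    rw [hd1]; exact mul_ne_zero (by norm_num) hσ1
  have hd2' : p₂ + starRingEnd ℂ p₂ ≠ 0 := by
    rw [hd2]; exact mul_ne_zero (by norm_num) hσ2
  have hcp : (p₁ + starRingEnd ℂ p₂) * (p₂ + starRingEnd ℂ p₁) ≠ 0 := by
    rw [hcross]; exact mul_ne_zero (by norm_num) (pow_ne_zero _ hσs)
  have hc12 : p₁ + starRingEnd ℂ p₂ ≠ 0 := left_ne_zero_of_mul hcp
  have hc21 : p₂ + starRingEnd ℂ p₁ ≠ 0 := right_ne_zero_of_mul hcp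
  -- numerator identity
  have hnum : Complex.exp (ξ₁ + starRingEnd ℂ ξ₂) * Complex.exp (ξ₂ + starRingEnd ℂ ξ₁)
      = Complex.exp (ξ₁ + starRingEnd ℂ ξ₁) * Complex.exp (ξ₂ + starRingEnd ℂ ξ₂) := by
    rw [← Complex.exp_add, ← Complex.exp_add]
    ring_nf
  -- real trig identity, cast to ℂ
  have htrig : (Real.sin ((φ₂ - φ₁) / 2) : ℂ) ^ 2
      = (Real.sin ((φ₁ + φ₂) / 2) : ℂ) ^ 2 - (Real.sin φ₁ : ℂ) * (Real.sin φ₂ : ℂ) := by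
    have h : Real.sin ((φ₂ - φ₁) / 2) ^ 2
        = Real.sin ((φ₁ + φ₂) / 2) ^ 2 - Real.sin φ₁ * Real.sin φ₂ := by
      have e1 := Real.sin_two_mul (φ₁ / 2)
      have e2 := Real.sin_two_mul (φ₂ / 2)
      rw [show 2 * (φ₁ / 2) = φ₁ by ring] at e1
      rw [show 2 * (φ₂ / 2) = φ₂ by ring] at e2
      have e3 : (φ₂ - φ₁) / 2 = φ₂ / 2 - φ₁ / 2 := by ring
      have e4 : (φ₁ + φ₂) / 2 = φ₁ / 2 + φ₂ / 2 := by ring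
      rw [e3, e4, Real.sin_sub, Real.sin_add, e1, e2]
      ring
    exact_mod_cast h
  -- coefficient as fraction
  have hcoef : ((Real.sin ((φ₂ - φ₁) / 2) ^ 2 / Real.sin ((φ₂ + φ₁) / 2) ^ 2 : ℝ) : ℂ)
      = ((Real.sin ((φ₁ + φ₂) / 2) : ℂ) ^ 2 - (Real.sin φ₁ : ℂ) * (Real.sin φ₂ : ℂ))
        / (Real.sin ((φ₁ + φ₂) / 2) : ℂ) ^ 2 := by
    have hb : Real.sin ((φ₂ + φ₁) / 2) = Real.sin ((φ₁ + φ₂) / 2) := by rw [add_comm]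
    rw [hb, Complex.ofReal_div, Complex.ofReal_pow, Complex.ofReal_pow, htrig]
  -- expand determinant and finish
  rw [Matrix.det_fin_two_of, hE1, hE2, hd1, hd2, hcoef]
  rw [div_mul_div_comm, hnum, hcross]
  exact gram_aux _ _ _ _ _ hσ1 hσ2 (pow_ne_zero 2 hσs)
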